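/- Fix a channel coefficient h ∈ ℂ with h ≠ 0. Then the MVU filter f_MVU = x/‖x‖² is not a minimizer of the zeroth-order symbol-estimate MSE for the ZF equalizer: there exists a nonzero filter f ∈ ℂ^B with M_dc(f) < M_dc(f_MVU). (Proposition 1: the MVU estimator is not optimal for minimizing [MSE_x^dc(ZF)]_0 when the channel is deterministic but unknown.) -/

import Mathlib

open MeasureTheory

/-- `φ(f) = fᴴ x = Σᵢ conj(fᵢ)·xᵢ`. -/
noncomputable def phi {B : ℕ} (x f : Fin B → ℂ) : ℂ :=
  ∑ i, (starRingEnd ℂ) (f i) * x i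

/-- Squared Euclidean norm `‖f‖² = Σᵢ |fᵢ|²`. -/
noncomputable def nsq {B : ℕ} (f : Fin B → ℂ) : ℝ :=
  ∑ i, Complex.normSq (f i)

/-- Zeroth-order symbol-estimate MSE of the ZF equalizer, deterministic channel `h`. -/
noncomputable def Mdc {B : ℕ} (σx2 σw2 : ℝ) (h : ℂ) (x f : Fin B → ℂ) : ℝ :=
  (σx2 * (Complex.normSq h * Complex.normSq (phi x f - 1) + σw2 * nsq f) + σw2) /
    (Complex.normSq h * Complex.normSq (phi x f) + σw2 * nsq f)

/-- The MVU channel-estimating filter `f_MVU = x / ‖x‖²`. -/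
noncomputable def fMVU {B : ℕ} (x : Fin B → ℂ) : Fin B → ℂ :=
  fun i => x i / (nsq x : ℂ)

/-- Proposition 1: the MVU estimator is not an optimal channel estimator for
minimizing `[MSE_x^dc(ZF)]₀` when the channel is deterministic but unknown. -/
theorem mvu_not_optimal_zeroth_order_dc_mse
    (B : ℕ) (hB : 1 ≤ B) (x : Fin B → ℂ) (hx : x ≠ 0)
    (σx2 σw2 : ℝ) (hσx : 0 < σx2) (hσw : 0 < σw2)
    (h : ℂ) (hh : h ≠ 0) :
    ∃ f : Fin B → ℂ, f ≠ 0 ∧ Mdc σx2 σw2 h x f < Mdc σx2 σw2 h x (fMVU x) := by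

  classical
  set a := Complex.normSq h with ha_def
  have ha : 0 < a := Complex.normSq_pos.2 hh
  -- nsq x > 0
  have hs : 0 < nsq x := by
    obtain ⟨i, hi⟩ : ∃ i, x i ≠ 0 := by
      by_contra hcon
      push_neg at hcon
      exact hx (funext hcon)
    refine Finset.sum_pos' (fun j _ => Complex.normSq_nonneg _) ⟨i, Finset.mem_univ i, ?_⟩
    exact Complex.normSq_pos.2 hi
  set s := nsq x with hs_def
  have hsne : (s : ℂ) ≠ 0 := by exact_mod_cast ne_of_gt hs
  -- phi of fMVU is 1
  have hphi0 : phi x (fMVU x) = 1 := by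
    unfold phi fMVU
    have : ∀ i, (starRingEnd ℂ) (x i / (s : ℂ)) * x i
        = ((Complex.normSq (x i) : ℝ) : ℂ) / (s : ℂ) := by
      intro i
      rw [map_div₀, Complex.conj_ofReal]
      rw [div_mul_eq_mul_div, ← Complex.normSq_eq_conj_mul_self]
    simp +zetaDelta only [this]
    rw [← Finset.sum_div]
    push_cast
    rw [show (∑ i, ((Complex.normSq (x i) : ℝ) : ℂ)) = ((s : ℝ) : ℂ) by
      push_cast [hs_def, nsq]; rfl]
    exact div_self hsne
  have hnsq0 : nsq (fMVU x) = 1 / s := by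
    unfold nsq fMVU
    have : ∀ i, Complex.normSq (x i / (s : ℂ)) = Complex.normSq (x i) / (s * s) := by
      intro i
      rw [Complex.normSq_div, Complex.normSq_ofReal]
    simp +zetaDelta only [this]
    rw [← Finset.sum_div]
    rw [show (∑ i, Complex.normSq (x i)) = s from rfl]
    field_simp
    rw [← hs_def]
    have hs0 : s ≠ 0 := ne_of_gt hs
    field_simp
  set c : ℝ := 1 + σw2 / (a * σx2) with hc_def
  have hc1 : 1 < c := by
    rw [hc_def]
    have : 0 < σw2 / (a * σx2) := div_pos hσw (mul_pos ha hσx)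
    linarith
  have hc0 : 0 < c := by linarith
  refine ⟨fun i => (c : ℂ) * fMVU x i, ?_, ?_⟩
  · intro hcon
    have hx0 : fMVU x = 0 := by
      funext i
      have := congrFun hcon i
      simp only [Pi.zero_apply, mul_eq_zero] at this
      rcases this with h1 | h1
      · exact absurd h1 (by exact_mod_cast ne_of_gt hc0)
      · simpa using h1
    have := congrArg (phi x) hx0
    rw [hphi0] at this
    simp [phi] at this
  · have hphi1 : phi x (fun i => (c : ℂ) * fMVU x i) = (c : ℂ) := by
      unfold phi
      have : ∀ i, (starRingEnd ℂ) ((c : ℂ) * fMVU x i) * x i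
          = (c : ℂ) * ((starRingEnd ℂ) (fMVU x i) * x i) := by
        intro i
        rw [map_mul, Complex.conj_ofReal, mul_assoc]
      simp only [this]
      rw [← Finset.mul_sum, show (∑ i, (starRingEnd ℂ) (fMVU x i) * x i) = phi x (fMVU x) from rfl,
        hphi0, mul_one]
    have hnsq1 : nsq (fun i => (c : ℂ) * fMVU x i) = c ^ 2 * (1 / s) := by
      unfold nsq
      have : ∀ i, Complex.normSq ((c : ℂ) * fMVU x i) = c ^ 2 * Complex.normSq (fMVU x i) := by
        intro i
        rw [Complex.normSq_mul, Complex.normSq_ofReal]; ring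
      simp only [this]
      rw [← Finset.mul_sum, show (∑ i, Complex.normSq (fMVU x i)) = nsq (fMVU x) from rfl, hnsq0]
    have hcm1 : Complex.normSq ((c : ℂ) - 1) = (c - 1) ^ 2 := by
      rw [show ((c : ℂ) - 1) = ((c - 1 : ℝ) : ℂ) by push_cast; ring, Complex.normSq_ofReal]
      ring
    rw [Mdc, Mdc, hphi0, hphi1, hnsq0, hnsq1, hcm1]
    simp only [sub_self, Complex.normSq_zero, Complex.normSq_one]
    rw [← ha_def]
    have hD0 : 0 < a * 1 + σw2 * (1 / s) := by positivity
    have hD1 : 0 < a * Complex.normSq (c : ℂ) + σw2 * (c ^ 2 * (1 / s)) := by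
      rw [Complex.normSq_ofReal]
      positivity
    rw [div_lt_div_iff₀ hD1 hD0, Complex.normSq_ofReal]
    have hkey : (c - 1) * (a * σx2) = σw2 := by
      rw [hc_def]
      field_simp
      ring
    have hgap : σx2 * (a * (c - 1) ^ 2) + σw2 < σw2 * c ^ 2 := by
      have h1 : σx2 * (a * (c - 1) ^ 2) = σw2 * (c - 1) := by nlinarith [hkey]
      nlinarith [mul_pos hσw (mul_pos hc0 (sub_pos.mpr hc1))]
    nlinarith [mul_pos hD0 (sub_pos.mpr hgap), sq_nonneg c, hs, one_div_pos.mpr hs]
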